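/- For every integer r ≥ 3, for every maximum matching M of the graph H_{2r+1,2r} there exist two distinct M-unsaturated vertices that have a common neighbor. -/

import Mathlib

/-- A matching `M` of `G` is maximum if no matching of `G` has more edges. -/
def SimpleGraph.IsMaximumMatching {α : Type*} (G : SimpleGraph α) (M : G.Subgraph) : Prop :=
  M.IsMatching ∧ ∀ M' : G.Subgraph, M'.IsMatching → M'.edgeSet.ncard ≤ M.edgeSet.ncard

/-- The (underlying simple) graph `H_n` of the paper (used with `n = 2r + 1`):
the vertices `x, y, z` are encoded as `Sum.inl 0, Sum.inl 1, Sum.inl 2`, the vertex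
`v_{k+1}^{(i)}` is encoded as `Sum.inr (k, i)`; `x` is joined to every `v_1^{(i)}`,
`y` to every `v_2^{(i)}`, `z` to every `v_3^{(i)}`, and for each `i` there are the
edges `v_1^{(i)} v_2^{(i)}` and `v_2^{(i)} v_3^{(i)}` (but not `v_3^{(i)} v_1^{(i)}`). -/
def HGraph (n : ℕ) : SimpleGraph (Fin 3 ⊕ Fin 3 × Fin n) where
  Adj a b :=
    match a, b with
    | .inl k, .inr p => p.1 = k
    | .inr p, .inl k => p.1 = k
    | .inr p, .inr q => p.2 = q.2 ∧ ((p.1 : ℕ) + 1 = (q.1 : ℕ) ∨ (q.1 : ℕ) + 1 = (p.1 : ℕ))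
    | _, _ => False
  symm := by
    constructor
    rintro (k | p) (k' | q) h
    · exact h
    · exact h
    · exact h
    · exact ⟨h.1.symm, h.2.symm⟩
  loopless := by
    constructor
    rintro (k | p) h
    · exact h
    · rcases h.2 with h2 | h2 <;> omega


open SimpleGraph in
lemma match_unique {α : Type*} {G : SimpleGraph α} {M : G.Subgraph} (hm : M.IsMatching)
    {v a b : α} (ha : M.Adj v a) (hb : M.Adj v b) : a = b := by
  obtain ⟨w, _, hw⟩ := hm (M.edge_vert ha)
  exact (hw a ha).trans (hw b hb).symm

/-- If all three vertices of leg `i` are saturated, some hub is matched into leg `i`;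
otherwise some vertex of leg `i` is unsaturated. -/
lemma key {n : ℕ} {M : (HGraph n).Subgraph} (hm : M.IsMatching) (i : Fin n) :
    ∃ k : Fin 3, M.Adj (Sum.inl k) (Sum.inr (k, i)) ∨ ∀ c, ¬ M.Adj (Sum.inr (k, i)) c := by
  by_cases h : ∃ k : Fin 3, ∀ c, ¬ M.Adj (Sum.inr (k, i)) c
  · obtain ⟨k, hk⟩ := h; exact ⟨k, Or.inr hk⟩
  push_neg at h
  obtain ⟨c, hc⟩ := h 1
  have hG := M.adj_sub hc
  rcases c with k' | ⟨a, b⟩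
  · have hk : (1 : Fin 3) = k' := hG
    subst hk
    exact ⟨1, Or.inl hc.symm⟩
  · obtain ⟨h1, h2⟩ := hG
    have hb : i = b := h1
    subst hb
    have ha3 := a.isLt
    simp only [Fin.isValue, Fin.val_one] at h2
    rcases h2 with h2 | h2
    · -- a = 2, so hc : M.Adj v2 v3; look at partner of v1
      have ha : a = 2 := by omega
      subst ha
      obtain ⟨d, hd⟩ := h 0
      have hGd := M.adj_sub hd
      rcases d with k'' | ⟨a', b'⟩
      · have hk : (0 : Fin 3) = k'' := hGd
        subst hk
        exact ⟨0, Or.inl hd.symm⟩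
      · obtain ⟨h1', h2'⟩ := hGd
        have hb' : i = b' := h1'
        subst hb'
        have ha3' := a'.isLt
        simp only [Fin.isValue, Fin.val_zero] at h2'
        have ha' : a' = 1 := by omega
        subst ha'
        exact absurd (match_unique hm hd.symm hc) (by simp)
    · -- a = 0, so hc : M.Adj v2 v1; look at partner of v3
      have ha : a = 0 := by omega
      subst ha
      obtain ⟨d, hd⟩ := h 2
      have hGd := M.adj_sub hd
      rcases d with k'' | ⟨a', b'⟩
      · have hk : (2 : Fin 3) = k'' := hGd
        subst hk
        exact ⟨2, Or.inl hd.symm⟩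
      · obtain ⟨h1', h2'⟩ := hGd
        have hb' : i = b' := h1'
        subst hb'
        have ha3' := a'.isLt
        simp only [Fin.isValue, Fin.val_two] at h2'
        have ha' : a' = 1 := by omega
        subst ha'
        exact absurd (match_unique hm hd.symm hc) (by simp)

/-- For every maximum matching `M` of `H_{2r+1,2r}` there exist two distinct
`M`-unsaturated vertices that have a common neighbor. -/
theorem stmt_11 (r : ℕ) (hr : 3 ≤ r) (M : (HGraph (2 * r + 1)).Subgraph)
    (hM : (HGraph (2 * r + 1)).IsMaximumMatching M) :
    ∃ a b, a ≠ b ∧ (∀ c, ¬ M.Adj a c) ∧ (∀ c, ¬ M.Adj b c) ∧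
      ∃ w, (HGraph (2 * r + 1)).Adj w a ∧ (HGraph (2 * r + 1)).Adj w b := by
  classical
  obtain ⟨hm, -⟩ := hM
  choose f hf using fun i => key (M := M) hm i
  have hcard : Fintype.card (Fin 3) * 2 < Fintype.card (Fin (2 * r + 1)) := by
    simp only [Fintype.card_fin]; omega
  obtain ⟨y, hy⟩ := Fintype.exists_lt_card_fiber_of_mul_lt_card f hcard
  rw [Finset.two_lt_card] at hy
  obtain ⟨a, ha, b, hb, c, hc, hab, hac, hbc⟩ := hy
  simp only [Finset.mem_filter, Finset.mem_univ, true_and] at ha hb hc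
  have hfa := hf a; rw [ha] at hfa
  have hfb := hf b; rw [hb] at hfb
  have hfc := hf c; rw [hc] at hfc
  have hub : ∀ i j : Fin (2 * r + 1), M.Adj (Sum.inl y) (Sum.inr (y, i)) →
      M.Adj (Sum.inl y) (Sum.inr (y, j)) → i = j := by
    intro i j h1 h2
    have := match_unique hm h1 h2
    simpa using this
  have fin : ∀ i j : Fin (2 * r + 1), i ≠ j → (∀ c, ¬ M.Adj (Sum.inr (y, i)) c) →
      (∀ c, ¬ M.Adj (Sum.inr (y, j)) c) →
      ∃ a b, a ≠ b ∧ (∀ c, ¬ M.Adj a c) ∧ (∀ c, ¬ M.Adj b c) ∧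
        ∃ w, (HGraph (2 * r + 1)).Adj w a ∧ (HGraph (2 * r + 1)).Adj w b := by
    intro i j hij h1 h2
    exact ⟨Sum.inr (y, i), Sum.inr (y, j), by simpa using hij, h1, h2,
      Sum.inl y, rfl, rfl⟩
  rcases hfa with hfa | hfa
  · rcases hfb with hfb | hfb
    · exact absurd (hub a b hfa hfb) hab
    · rcases hfc with hfc | hfc
      · exact absurd (hub a c hfa hfc) hac
      · exact fin b c hbc hfb hfc
  · rcases hfb with hfb | hfb
    · rcases hfc with hfc | hfc
      · exact absurd (hub b c hfb hfc) hbc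
      · exact fin a c hac hfa hfc
    · exact fin a b hab hfa hfb
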